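/- arXiv:1512.08053 — 3 statements merged into one kernel-verified Lean document; each statement's English description precedes it below -/
import Mathlib

section
/- Let k be a field and R = k[y_0,...,y_n]. If f_0,...,f_n is an R-regular sequence of homogeneous elements all of the same positive degree, then the k-algebra map φ: S = k[y_0,...,y_n] → R given by y_i ↦ f_i is injective. -/
open MvPolynomial

open MvPolynomial RingTheory.Sequence Polynomial
open scoped Pointwise

universe v

lemma poly_inj {A B : Type*} [CommRing A] [CommRing B] (χ : A →+* B) (b : B)
    (hb : ∀ x : B, b * x = 0 → x = 0)
    (h : Function.Injective ((Ideal.Quotient.mk (Ideal.span {b})).comp χ)) :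
    Function.Injective (Polynomial.eval₂RingHom χ b) := by
  rw [injective_iff_map_eq_zero]
  suffices H : ∀ N (q : A[X]), q.natDegree ≤ N → Polynomial.eval₂ χ b q = 0 → q = 0 by
    intro q hq
    exact H q.natDegree q le_rfl hq
  intro N
  induction N with
  | zero =>
    intro q hq h0
    rw [Polynomial.eq_C_of_natDegree_le_zero hq] at h0 ⊢
    rw [Polynomial.eval₂_C] at h0
    have : ((Ideal.Quotient.mk (Ideal.span {b})).comp χ) (q.coeff 0) = 0 := by
      simp [h0]
    rw [← map_zero ((Ideal.Quotient.mk (Ideal.span {b})).comp χ)] at this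
    rw [h this, map_zero]
  | succ N ih =>
    intro q hq h0
    have key : Polynomial.eval₂ χ b q = Polynomial.eval₂ χ b q.divX * b + χ (q.coeff 0) := by
      conv_lhs => rw [← Polynomial.divX_mul_X_add q]
      rw [Polynomial.eval₂_add, Polynomial.eval₂_mul, Polynomial.eval₂_X, Polynomial.eval₂_C]
    have hc : q.coeff 0 = 0 := by
      apply h
      rw [map_zero, RingHom.comp_apply]
      have h2 : (Ideal.Quotient.mk (Ideal.span {b})) (Polynomial.eval₂ χ b q) = 0 := by
        rw [h0, map_zero]
      rw [key, map_add] at h2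
      rw [← h2]
      have h3 : (Ideal.Quotient.mk (Ideal.span {b})) (Polynomial.eval₂ χ b q.divX * b) = 0 := by
        rw [Ideal.Quotient.eq_zero_iff_mem]
        exact Ideal.mul_mem_left _ _ (Ideal.subset_span rfl)
      rw [h3, zero_add]
    rw [key, hc, map_zero, add_zero] at h0
    have hdiv : q.divX = 0 := by
      apply ih
      · have := Polynomial.natDegree_divX_eq_natDegree_tsub_one (p := q)
        omega
      · exact hb _ (by rwa [mul_comm])
    rw [← Polynomial.divX_mul_X_add q, hdiv, hc, map_zero, zero_mul, add_zero]

lemma main_ind (k : Type*) [Field k] :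
    ∀ (r : ℕ) (B : Type v) (_ : CommRing B) (_ : Algebra k B) (g : Fin r → B),
      IsWeaklyRegular B (List.ofFn g) → Ideal.span (Set.range g) ≠ ⊤ →
      Function.Injective (MvPolynomial.aeval (R := k) g) := by
  intro r
  induction r with
  | zero =>
    intro B _ _ g _ hp
    have hB : Nontrivial B := by
      by_contra hc
      rw [not_nontrivial_iff_subsingleton] at hc
      exact hp (Subsingleton.elim _ _)
    intro p q hpq
    obtain ⟨a, rfl⟩ := MvPolynomial.C_surjective (Fin 0) p
    obtain ⟨c, rfl⟩ := MvPolynomial.C_surjective (Fin 0) q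
    simp only [MvPolynomial.aeval_C] at hpq
    rw [(algebraMap k B).injective hpq]
  | succ r IH =>
    intro B _ _ g hw hp
    -- peel the regularity
    rw [List.ofFn_succ, isWeaklyRegular_cons_iff'] at hw
    obtain ⟨h0, hw⟩ := hw
    rw [List.map_ofFn] at hw
    have heq : ((g 0) • (⊤ : Submodule B B)) = (Ideal.span {g 0} : Ideal B) := by
      rw [← Submodule.ideal_span_singleton_smul, smul_eq_mul, Ideal.mul_top]
    let mk₀ := Ideal.Quotient.mk (Ideal.span {g 0})
    let e : QuotSMulTop (g 0) B ≃+ (B ⧸ Ideal.span {g 0}) :=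
      (Submodule.quotEquivOfEq _ _ heq).toAddEquiv
    have hsm : ∀ a ∈ List.ofFn (mk₀ ∘ fun i : Fin r => g i.succ),
        ∀ x : QuotSMulTop (g 0) B, e (a • x) = a • e x := by
      intro a _ x
      obtain ⟨c, rfl⟩ := Ideal.Quotient.mk_surjective a
      obtain ⟨y, rfl⟩ := Submodule.Quotient.mk_surjective _ x
      rfl
    have hcong := AddEquiv.isWeaklyRegular_congr (e := e)
      (as := List.ofFn (mk₀ ∘ fun i : Fin r => g i.succ))
      (bs := List.ofFn (mk₀ ∘ fun i : Fin r => g i.succ))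
      (List.forall₂_same.mpr hsm)
    rw [hcong] at hw
    -- properness in the quotient
    have hp' : Ideal.span (Set.range (mk₀ ∘ fun i : Fin r => g i.succ)) ≠ ⊤ := by
      intro hT
      apply hp
      rw [Set.range_comp, ← Ideal.map_span] at hT
      have h2 : Ideal.comap mk₀ (Ideal.map mk₀ (Ideal.span (Set.range fun i : Fin r => g i.succ))) = ⊤ := by
        rw [hT]; exact Ideal.comap_top
      rw [Ideal.comap_map_of_surjective mk₀ Ideal.Quotient.mk_surjective] at h2
      have hker : Ideal.comap mk₀ ⊥ = Ideal.span {g 0} := by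
        rw [← RingHom.ker_eq_comap_bot]; exact Ideal.mk_ker
      rw [hker] at h2
      rw [eq_top_iff, ← h2]
      apply sup_le
      · apply Ideal.span_mono
        intro x hx
        obtain ⟨i, rfl⟩ := hx
        exact ⟨i.succ, rfl⟩
      · rw [Ideal.span_le]
        intro x hx
        rw [Set.mem_singleton_iff] at hx
        exact Ideal.subset_span ⟨0, hx.symm⟩
    -- IH
    have hinj := IH (B ⧸ Ideal.span {g 0}) inferInstance inferInstance (mk₀ ∘ fun i : Fin r => g i.succ) hw hp'
    -- compatibility ring hom identities
    set χ : MvPolynomial (Fin r) k →+* B := ((MvPolynomial.aeval (R := k) fun i : Fin r => g i.succ) : MvPolynomial (Fin r) k →ₐ[k] B).toRingHom with hχ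
    have hcomp : mk₀.comp χ = ((MvPolynomial.aeval (R := k) (mk₀ ∘ fun i : Fin r => g i.succ)) :
        MvPolynomial (Fin r) k →+* B ⧸ Ideal.span {g 0}) := by
      apply MvPolynomial.ringHom_ext
      · intro a; simp [hχ, mk₀]
      · intro i; simp [hχ, mk₀]
    have hinj₂ : Function.Injective (Polynomial.eval₂RingHom χ (g 0)) := by
      apply poly_inj
      · intro x hx
        exact h0 (by simpa [smul_eq_mul] using hx)
      · rw [hcomp]
        exact hinj
    have hfin : ∀ p : MvPolynomial (Fin (r + 1)) k,
        MvPolynomial.aeval (R := k) g p =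
          Polynomial.eval₂ χ (g 0) (MvPolynomial.finSuccEquiv k r p) := by
      intro p
      have : ((Polynomial.eval₂RingHom χ (g 0)).comp
          (MvPolynomial.finSuccEquiv k r : MvPolynomial (Fin (r+1)) k →+* _)) =
          ((MvPolynomial.aeval (R := k) g : MvPolynomial (Fin (r+1)) k →ₐ[k] B) :
            MvPolynomial (Fin (r+1)) k →+* B) := by
        apply MvPolynomial.ringHom_ext
        · intro a
          simp [hχ, MvPolynomial.finSuccEquiv_apply]
        · intro i
          refine Fin.cases ?_ ?_ i
          · simp [MvPolynomial.finSuccEquiv_X_zero]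
          · intro j
            simp [MvPolynomial.finSuccEquiv_X_succ, hχ]
      have := congrArg (fun φ => φ p) this
      simpa using this.symm
    intro p q hpq
    rw [hfin p, hfin q] at hpq
    exact (MvPolynomial.finSuccEquiv k r).injective (hinj₂ hpq)

/-- If `f 0, ..., f n` is a regular sequence of homogeneous elements of the same
positive degree in `R = k[y_0,...,y_n]`, then the `k`-algebra map `S → R`, `y_i ↦ f_i`,
is injective. -/
theorem stmt0 (k : Type*) [Field k] (n : ℕ) (f : Fin (n + 1) → MvPolynomial (Fin (n + 1)) k)
    (d : ℕ) (hd : 0 < d) (hhom : ∀ i, (f i).IsHomogeneous d)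
    (hreg : RingTheory.Sequence.IsRegular (MvPolynomial (Fin (n + 1)) k) (List.ofFn f)) :
    Function.Injective (MvPolynomial.aeval (R := k) f) := by
  apply main_ind k (n + 1) (MvPolynomial (Fin (n + 1)) k) inferInstance inferInstance f
    hreg.toIsWeaklyRegular
  intro hT
  apply hreg.top_ne_smul
  have hof : Ideal.ofList (List.ofFn f) = Ideal.span (Set.range f) := by
    unfold Ideal.ofList
    congr 1
    exact Set.ext fun x => List.mem_ofFn
  rw [hof, hT, Submodule.top_smul]
end

section
/- Over the complex numbers, the ideal I = (x(y^3 − z^3), y(x^3 − z^3), z(x^3 − y^3)) ⊆ C[x,y,z] of the dual Hesse (Fermat) configuration satisfies: the form F = (x^3 − y^3)(x^3 − z^3)(y^3 − z^3) belongs to I^{(3)} but F ∉ I^2; hence I^{(3)} ⊄ I^2. -/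
open MvPolynomial

/-- The `m`-th symbolic power `I^(m) = ⋂_{P ∈ Ass(R/I)} (I^m R_P ∩ R)`. -/
noncomputable def symbolicPower {R : Type*} [CommRing R] (I : Ideal R) (m : ℕ) : Ideal R :=
  ⨅ (P : Ideal R) (hP : P ∈ associatedPrimes R (R ⧸ I)),
    letI : P.IsPrime := hP.1
    Ideal.comap (algebraMap R (Localization.AtPrime P))
      (Ideal.map (algebraMap R (Localization.AtPrime P)) (I ^ m))

noncomputable section
abbrev R3 := MvPolynomial (Fin 3) ℂ


lemma primeX (i : Fin 3) : Prime (X i : R3) := by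
  have h0 : Prime (X 0 : R3) := by
    rw [← MulEquiv.prime_iff (MvPolynomial.finSuccEquiv ℂ 2).toRingEquiv.toMulEquiv]
    show Prime ((MvPolynomial.finSuccEquiv ℂ 2) (X 0))
    rw [MvPolynomial.finSuccEquiv_X_zero]
    exact Polynomial.prime_X
  rw [← MulEquiv.prime_iff (MvPolynomial.renameEquiv ℂ (Equiv.swap (0 : Fin 3) i)).toRingEquiv.toMulEquiv]
  show Prime ((MvPolynomial.renameEquiv ℂ (Equiv.swap (0 : Fin 3) i)) (X i))
  rw [MvPolynomial.renameEquiv_apply, MvPolynomial.rename_X, Equiv.swap_apply_right]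
  exact h0

lemma X1_not_dvd_X2 : ¬ ((X 1 : R3) ∣ X 2) := by
  rintro ⟨w, hw⟩
  have := congrArg (eval ![0, 0, 1]) hw
  simp at this

def tau : R3 →ₐ[ℂ] R3 := aeval ![2 * X 1 + 4 * X 2, X 1, X 2]

lemma tau_X0 : tau (X 0) = 2 * X 1 + 4 * X 2 := by simp [tau, map_ofNat]
lemma tau_X1 : tau (X 1) = X 1 := by simp [tau]
lemma tau_X2 : tau (X 2) = X 2 := by simp [tau]

lemma tau_tau (p : R3) : tau (tau p) = tau p := by
  have h : tau.comp tau = tau := by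
    apply MvPolynomial.algHom_ext
    intro i
    fin_cases i <;> simp [tau, map_ofNat]
  calc tau (tau p) = (tau.comp tau) p := rfl
  _ = tau p := by rw [h]

lemma Ldvd (p : R3) : (X 0 - 2 * X 1 - 4 * X 2) ∣ (p - tau p) := by
  induction p using MvPolynomial.induction_on with
  | C a => simp [tau]
  | add p q hp hq => have := dvd_add hp hq; convert this using 1; rw [map_add]; ring
  | mul_X p i hp =>
      rw [map_mul]
      obtain ⟨w, hw⟩ := hp
      fin_cases i <;> simp only [Fin.zero_eta, Fin.mk_one, Fin.isValue, Fin.reduceFinMk]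
      · refine ⟨w * X 0 + tau p * 1, ?_⟩
        rw [tau_X0]; linear_combination ((X 0 : R3)) * hw + (tau p) * (mul_one (X 0 - 2*X 1 - 4*X 2 : R3)).symm
      · refine ⟨w * X 1, ?_⟩; rw [tau_X1]; linear_combination (X 1 : R3) * hw
      · refine ⟨w * X 2, ?_⟩; rw [tau_X2]; linear_combination (X 2 : R3) * hw

def sP : R3 := 2 * X 1 + 4 * X 2
def gb1 : R3 := sP * (X 1 ^ 3 - X 2 ^ 3)
def gb2 : R3 := X 1 * (sP ^ 3 - X 2 ^ 3)
def gb3 : R3 := X 2 * (sP ^ 3 - X 1 ^ 3)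

lemma not_dvd_both {π : R3} (hπ : Prime π) (h2 : π ∣ gb2) (h3 : π ∣ gb3) : False := by
  have hy : π ∣ (2973880 : R3) * X 1 ^ 8 := by
    obtain ⟨w2, e2⟩ := h2; obtain ⟨w3, e3⟩ := h3
    refine ⟨((-23569344)*X 1^1*X 2^3 + (-37664160)*X 1^2*X 2^2 + (-18168528)*X 1^3*X 2^1 + (371735)*X 1^4) * w2
      + ((23201073)*X 1^2*X 2^2 + (37628064)*X 1^3*X 2^1 + (18214992)*X 1^4) * w3, ?_⟩
    have key : ((-23569344)*X 1^1*X 2^3 + (-37664160)*X 1^2*X 2^2 + (-18168528)*X 1^3*X 2^1 + (371735)*X 1^4) * gb2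
      + ((23201073)*X 1^2*X 2^2 + (37628064)*X 1^3*X 2^1 + (18214992)*X 1^4) * gb3 = (2973880 : R3) * X 1 ^ 8 := by
      simp only [gb2, gb3, sP]; ring
    linear_combination (-1 : R3) * key + ((-23569344)*X 1^1*X 2^3 + (-37664160)*X 1^2*X 2^2 + (-18168528)*X 1^3*X 2^1 + (371735)*X 1^4) * e2
      + ((23201073)*X 1^2*X 2^2 + (37628064)*X 1^3*X 2^1 + (18214992)*X 1^4) * e3
  have hz : π ∣ (71373120 : R3) * X 2 ^ 8 := by
    obtain ⟨w2, e2⟩ := h2; obtain ⟨w3, e3⟩ := h3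
    refine ⟨((-1699360)*X 2^4 + (-38240016)*X 1^1*X 2^3 + (-32762205)*X 1^2*X 2^2 + (-5831392)*X 1^3*X 2^1) * w2
      + ((1115205)*X 2^4 + (39355152)*X 1^2*X 2^2 + (31730136)*X 1^3*X 2^1 + (6664448)*X 1^4) * w3, ?_⟩
    have key : ((-1699360)*X 2^4 + (-38240016)*X 1^1*X 2^3 + (-32762205)*X 1^2*X 2^2 + (-5831392)*X 1^3*X 2^1) * gb2
      + ((1115205)*X 2^4 + (39355152)*X 1^2*X 2^2 + (31730136)*X 1^3*X 2^1 + (6664448)*X 1^4) * gb3 = (71373120 : R3) * X 2 ^ 8 := by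
      simp only [gb2, gb3, sP]; ring
    linear_combination (-1 : R3) * key + ((-1699360)*X 2^4 + (-38240016)*X 1^1*X 2^3 + (-32762205)*X 1^2*X 2^2 + (-5831392)*X 1^3*X 2^1) * e2
      + ((1115205)*X 2^4 + (39355152)*X 1^2*X 2^2 + (31730136)*X 1^3*X 2^1 + (6664448)*X 1^4) * e3
  have hy8 : π ∣ (X 1 : R3) ^ 8 := by
    rcases hπ.2.2 _ _ hy with h | h
    · exfalso
      have : IsUnit ((2973880 : ℂ)) := isUnit_iff_ne_zero.2 (by norm_num)
      have hu : IsUnit ((2973880 : R3)) := by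
        have : ((2973880 : R3)) = C (2973880 : ℂ) := by simp [map_ofNat]
        rw [this]; exact IsUnit.map (C : ℂ →+* R3) ‹IsUnit (2973880:ℂ)›
      exact hπ.2.1 (isUnit_of_dvd_unit h hu)
    · exact h
  have hz8 : π ∣ (X 2 : R3) ^ 8 := by
    rcases hπ.2.2 _ _ hz with h | h
    · exfalso
      have : IsUnit ((71373120 : ℂ)) := isUnit_iff_ne_zero.2 (by norm_num)
      have hu : IsUnit ((71373120 : R3)) := by
        have : ((71373120 : R3)) = C (71373120 : ℂ) := by simp [map_ofNat]
        rw [this]; exact IsUnit.map (C : ℂ →+* R3) ‹IsUnit (71373120:ℂ)›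
      exact hπ.2.1 (isUnit_of_dvd_unit h hu)
    · exact h
  have hy1 : π ∣ (X 1 : R3) := hπ.dvd_of_dvd_pow hy8
  have hz1 : π ∣ (X 2 : R3) := hπ.dvd_of_dvd_pow hz8
  obtain ⟨k, hk⟩ := hy1
  rcases (primeX 1).irreducible.isUnit_or_isUnit hk with h | h
  · exact hπ.2.1 h
  · obtain ⟨u, hu⟩ := h
    apply X1_not_dvd_X2
    have : (X 1 : R3) ∣ π := ⟨(u⁻¹ : R3ˣ), by rw [hk, ← hu]; simp [mul_assoc]⟩
    exact this.trans hz1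

lemma syz_lift : ∀ r : R3, r ≠ 0 → ∀ a b c p q : R3,
    r * a = p * sP ^ 2 + q * (X 1 * X 2) →
    r * b = p * (-(X 1 ^ 2)) + q * (-(sP * X 2)) →
    r * c = p * X 2 ^ 2 + q * (sP * X 1) →
    ∃ p' q' : R3, a = p' * sP ^ 2 + q' * (X 1 * X 2) ∧
      b = p' * (-(X 1 ^ 2)) + q' * (-(sP * X 2)) ∧
      c = p' * X 2 ^ 2 + q' * (sP * X 1) := by
  intro r
  induction r using UniqueFactorizationMonoid.induction_on_prime with
  | h₁ => intro h; exact absurd rfl h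
  | h₂ x hx =>
      intro _ a b c p q ea eb ec
      obtain ⟨u, rfl⟩ := hx
      have hu : ((u⁻¹ : R3ˣ) : R3) * ((u : R3ˣ) : R3) = 1 := u.inv_mul
      refine ⟨((u⁻¹ : R3ˣ) : R3) * p, ((u⁻¹ : R3ˣ) : R3) * q, ?_, ?_, ?_⟩
      · linear_combination ((u⁻¹ : R3ˣ) : R3) * ea - a * hu
      · linear_combination ((u⁻¹ : R3ˣ) : R3) * eb - b * hu
      · linear_combination ((u⁻¹ : R3ˣ) : R3) * ec - c * hu
  | h₃ r₀ π hr₀ hπ ih =>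
      intro _ a b c p q ea eb ec
      have hpg1 : π ∣ p * gb1 := by
        refine ⟨-(r₀ * (sP * X 1 * b + sP * X 2 * c)), ?_⟩
        simp only [gb1]
        linear_combination (sP * X 1) * eb + (sP * X 2) * ec
      have hpg2 : π ∣ p * gb2 := by
        refine ⟨r₀ * (sP * X 1 * a - X 1 * X 2 * c), ?_⟩
        simp only [gb2]
        linear_combination (-(sP * X 1)) * ea + (X 1 * X 2) * ec
      have hpg3 : π ∣ p * gb3 := by
        refine ⟨r₀ * (sP * X 2 * a + X 1 * X 2 * b), ?_⟩
        simp only [gb3]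
        linear_combination (-(sP * X 2)) * ea + (-(X 1 * X 2)) * eb
      have hqg2 : π ∣ q * gb2 := by
        refine ⟨-(r₀ * (X 2 ^ 2 * a - sP ^ 2 * c)), ?_⟩
        simp only [gb2]
        linear_combination (X 2 ^ 2) * ea + (-(sP ^ 2)) * ec
      have hqg3 : π ∣ q * gb3 := by
        refine ⟨-(r₀ * (X 1 ^ 2 * a + sP ^ 2 * b)), ?_⟩
        simp only [gb3]
        linear_combination (X 1 ^ 2) * ea + (sP ^ 2) * eb
      have hp : π ∣ p := by
        rcases hπ.2.2 _ _ hpg2 with h | h2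
        · exact h
        rcases hπ.2.2 _ _ hpg3 with h | h3
        · exact h
        exact absurd (not_dvd_both hπ h2 h3) not_false
      have hq : π ∣ q := by
        rcases hπ.2.2 _ _ hqg2 with h | h2
        · exact h
        rcases hπ.2.2 _ _ hqg3 with h | h3
        · exact h
        exact absurd (not_dvd_both hπ h2 h3) not_false
      obtain ⟨p₁, rfl⟩ := hp
      obtain ⟨q₁, rfl⟩ := hq
      have hπ0 : π ≠ 0 := hπ.ne_zero
      refine ih hr₀ a b c p₁ q₁ ?_ ?_ ?_
      · apply mul_left_cancel₀ hπ0; linear_combination ea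
      · apply mul_left_cancel₀ hπ0; linear_combination eb
      · apply mul_left_cancel₀ hπ0; linear_combination ec

def g1 : R3 := X 0 * (X 1 ^ 3 - X 2 ^ 3)
def g2 : R3 := X 1 * (X 0 ^ 3 - X 2 ^ 3)
def g3 : R3 := X 2 * (X 0 ^ 3 - X 1 ^ 3)

lemma mem_span_triple {u a b c : R3} :
    u ∈ Ideal.span {a, b, c} ↔ ∃ p q r : R3, u = p * a + q * b + r * c := by
  constructor
  · intro h
    rw [Ideal.mem_span_insert] at h
    obtain ⟨p, w, hw, rfl⟩ := h
    rw [Ideal.mem_span_insert] at hw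
    obtain ⟨q, w2, hw2, rfl⟩ := hw
    rw [Ideal.mem_span_singleton] at hw2
    obtain ⟨r, rfl⟩ := hw2
    exact ⟨p, q, r, by ring⟩
  · rintro ⟨p, q, r, rfl⟩
    have ha : a ∈ Ideal.span {a, b, c} := Ideal.subset_span (by simp)
    have hb : b ∈ Ideal.span {a, b, c} := Ideal.subset_span (by simp)
    have hc : c ∈ Ideal.span {a, b, c} := Ideal.subset_span (by simp)
    exact Ideal.add_mem _ (Ideal.add_mem _ (Ideal.mul_mem_left _ _ ha) (Ideal.mul_mem_left _ _ hb))
      (Ideal.mul_mem_left _ _ hc)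

lemma tau_g1 : tau g1 = gb1 := by
  simp only [g1, gb1, sP, map_mul, map_sub, map_pow, tau_X0, tau_X1, tau_X2]
lemma tau_g2 : tau g2 = gb2 := by
  simp only [g2, gb2, sP, map_mul, map_sub, map_pow, tau_X0, tau_X1, tau_X2]
lemma tau_g3 : tau g3 = gb3 := by
  simp only [g3, gb3, sP, map_mul, map_sub, map_pow, tau_X0, tau_X1, tau_X2]

lemma gb1_ne : (gb1 : R3) ≠ 0 := by
  intro h
  have := congrArg (eval ![0, 1, 0]) h
  simp [gb1, sP] at this

lemma L_ne : (X 0 - 2 * X 1 - 4 * X 2 : R3) ≠ 0 := by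
  intro h
  have := congrArg (eval ![1, 0, 0]) h
  simp at this

lemma nzd {f : R3} (h : (X 0 - 2 * X 1 - 4 * X 2) * f ∈ Ideal.span {g1, g2, g3}) :
    f ∈ Ideal.span {g1, g2, g3} := by
  rw [mem_span_triple] at h
  obtain ⟨a, b, c, hf⟩ := h
  have hsyz : tau a * gb1 + tau b * gb2 + tau c * gb3 = 0 := by
    have h2 := congrArg tau hf
    rw [map_mul, map_add, map_add, map_mul, map_mul, map_mul, tau_g1, tau_g2, tau_g3] at h2
    have hL : tau (X 0 - 2 * X 1 - 4 * X 2) = 0 := by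
      simp [tau, map_ofNat]
    rw [hL, zero_mul] at h2
    linear_combination -h2
  have ea : gb1 * tau a = (-(sP * (tau b * X 1 + tau c * X 2))) * sP ^ 2
      + (X 1 ^ 2 * tau c + X 2 ^ 2 * tau b) * (X 1 * X 2) := by
    simp only [gb1, gb2, gb3, sP] at hsyz ⊢
    linear_combination hsyz
  have eb : gb1 * tau b = (-(sP * (tau b * X 1 + tau c * X 2))) * (-(X 1 ^ 2))
      + (X 1 ^ 2 * tau c + X 2 ^ 2 * tau b) * (-(sP * X 2)) := by
    simp only [gb1, sP]; ring
  have ec : gb1 * tau c = (-(sP * (tau b * X 1 + tau c * X 2))) * (X 2 ^ 2)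
      + (X 1 ^ 2 * tau c + X 2 ^ 2 * tau b) * (sP * X 1) := by
    simp only [gb1, sP]; ring
  obtain ⟨p, q, ha', hb', hc'⟩ := syz_lift gb1 gb1_ne (tau a) (tau b) (tau c) _ _ ea eb ec
  -- make p q tau-invariant
  have hsfix : tau (sP ^ 2) = sP ^ 2 := by simp [tau, sP, map_ofNat]
  have hyz : tau (X 1 * X 2) = X 1 * X 2 := by simp [tau]
  have hy2 : tau (-(X 1 ^ 2)) = -(X 1 ^ 2) := by simp [tau]
  have hsz : tau (-(sP * X 2)) = -(sP * X 2) := by simp [tau, sP, map_ofNat]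
  have hsy : tau (sP * X 1) = sP * X 1 := by simp [tau, sP, map_ofNat]
  have ha : tau a = tau p * sP ^ 2 + tau q * (X 1 * X 2) := by
    have := congrArg tau ha'
    rwa [tau_tau, map_add, map_mul, map_mul, hsfix, hyz] at this
  have hb : tau b = tau p * (-(X 1 ^ 2)) + tau q * (-(sP * X 2)) := by
    have := congrArg tau hb'
    rwa [tau_tau, map_add, map_mul, map_mul, hy2, hsz] at this
  have hc : tau c = tau p * X 2 ^ 2 + tau q * (sP * X 1) := by
    have := congrArg tau hc'
    rwa [tau_tau, map_add, map_mul, map_mul, (by simp [tau] : tau ((X 2 : R3) ^ 2) = X 2 ^ 2), hsy] at this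
  -- lift back
  have hpfix : tau (tau p) = tau p := tau_tau p
  have hqfix : tau (tau q) = tau q := tau_tau q
  obtain ⟨a₁, hA⟩ : (X 0 - 2*X 1 - 4*X 2 : R3) ∣ (a - (tau p * X 0 ^ 2 + tau q * (X 1 * X 2))) := by
    have hd := Ldvd (a - (tau p * X 0 ^ 2 + tau q * (X 1 * X 2)))
    have ht : tau (a - (tau p * X 0 ^ 2 + tau q * (X 1 * X 2))) = 0 := by
      rw [map_sub, map_add, map_mul, map_mul, hpfix, hqfix, hyz, map_pow, tau_X0, ha]
      simp only [sP]; ring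
    rwa [ht, sub_zero] at hd
  obtain ⟨b₁, hB⟩ : (X 0 - 2*X 1 - 4*X 2 : R3) ∣ (b - (tau p * (-(X 1 ^ 2)) + tau q * (-(X 0 * X 2)))) := by
    have hd := Ldvd (b - (tau p * (-(X 1 ^ 2)) + tau q * (-(X 0 * X 2))))
    have ht : tau (b - (tau p * (-(X 1 ^ 2)) + tau q * (-(X 0 * X 2)))) = 0 := by
      rw [map_sub, map_add, map_mul, map_mul, hpfix, hqfix, hy2, map_neg, map_mul, tau_X0, tau_X2, hb]
      simp only [sP]; ring
    rwa [ht, sub_zero] at hd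
  obtain ⟨c₁, hC⟩ : (X 0 - 2*X 1 - 4*X 2 : R3) ∣ (c - (tau p * X 2 ^ 2 + tau q * (X 0 * X 1))) := by
    have hd := Ldvd (c - (tau p * X 2 ^ 2 + tau q * (X 0 * X 1)))
    have ht : tau (c - (tau p * X 2 ^ 2 + tau q * (X 0 * X 1))) = 0 := by
      rw [map_sub, map_add, map_mul, map_mul, hpfix, hqfix,
        (by simp [tau] : tau ((X 2 : R3) ^ 2) = X 2 ^ 2), map_mul, tau_X0, tau_X1, hc]
      simp only [sP]; ring
    rwa [ht, sub_zero] at hd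
  have hkey : (X 0 - 2*X 1 - 4*X 2) * f = (X 0 - 2*X 1 - 4*X 2) * (a₁ * g1 + b₁ * g2 + c₁ * g3) := by
    rw [hf]
    have e1 : a = tau p * X 0 ^ 2 + tau q * (X 1 * X 2) + (X 0 - 2*X 1 - 4*X 2) * a₁ := by
      linear_combination hA
    have e2 : b = tau p * (-(X 1 ^ 2)) + tau q * (-(X 0 * X 2)) + (X 0 - 2*X 1 - 4*X 2) * b₁ := by
      linear_combination hB
    have e3 : c = tau p * X 2 ^ 2 + tau q * (X 0 * X 1) + (X 0 - 2*X 1 - 4*X 2) * c₁ := by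
      linear_combination hC
    rw [e1, e2, e3]
    simp only [g1, g2, g3]
    ring
  have hff : f = a₁ * g1 + b₁ * g2 + c₁ * g3 := mul_left_cancel₀ L_ne hkey
  rw [hff, mem_span_triple]
  exact ⟨a₁, b₁, c₁, rfl⟩


lemma hc_mul (q G : R3) (hG : G.IsHomogeneous 8) :
    homogeneousComponent 9 (q * G) = homogeneousComponent 1 q * G := by
  conv_lhs => rw [← sum_homogeneousComponent q, Finset.sum_mul]
  rw [map_sum]
  have key : ∀ i, homogeneousComponent 9 (homogeneousComponent i q * G)
      = if i = 1 then homogeneousComponent 1 q * G else 0 := by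
    intro i
    have hh : (homogeneousComponent i q * G).IsHomogeneous (i + 8) :=
      (homogeneousComponent_isHomogeneous i q).mul hG
    rw [homogeneousComponent_of_mem ((mem_homogeneousSubmodule _ _).2 hh)]
    by_cases hi : i = 1
    · subst hi; simp
    · rw [if_neg (by omega), if_neg hi]
  calc (∑ i ∈ Finset.range (q.totalDegree + 1),
          homogeneousComponent 9 (homogeneousComponent i q * G))
      = ∑ i ∈ Finset.range (q.totalDegree + 1),
          (if i = 1 then homogeneousComponent 1 q * G else 0) :=
        Finset.sum_congr rfl (fun i _ => key i)
    _ = homogeneousComponent 1 q * G := by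
        rw [Finset.sum_ite_eq' (Finset.range (q.totalDegree + 1)) 1
          (fun _ => homogeneousComponent 1 q * G)]
        by_cases h1 : 1 ∈ Finset.range (q.totalDegree + 1)
        · rw [if_pos h1]
        · rw [if_neg h1]
          have : q.totalDegree < 1 := by
            simp only [Finset.mem_range, not_lt] at h1; omega
          rw [homogeneousComponent_eq_zero _ _ this, zero_mul]

lemma deg_one_single {d : Fin 3 →₀ ℕ} (hd : d.degree = 1) :
    d = Finsupp.single 0 1 ∨ d = Finsupp.single 1 1 ∨ d = Finsupp.single 2 1 := by
  have hsum : d.degree = d 0 + d 1 + d 2 := by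
    rw [Finsupp.degree_apply]
    rw [Finset.sum_subset (Finset.subset_univ d.support)
      (by intro i _ hi; exact Finsupp.notMem_support_iff.1 hi)]
    rw [Fin.sum_univ_three]
  rw [hsum] at hd
  have h0 := Nat.le_of_eq hd
  rcases (by omega : (d 0 = 1 ∧ d 1 = 0 ∧ d 2 = 0) ∨ (d 0 = 0 ∧ d 1 = 1 ∧ d 2 = 0)
      ∨ (d 0 = 0 ∧ d 1 = 0 ∧ d 2 = 1)) with ⟨h1,h2,h3⟩|⟨h1,h2,h3⟩|⟨h1,h2,h3⟩
  · left; ext i; fin_cases i <;> simp [Finsupp.single_apply, h1, h2, h3]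
  · right; left; ext i; fin_cases i <;> simp [Finsupp.single_apply, h1, h2, h3]
  · right; right; ext i; fin_cases i <;> simp [Finsupp.single_apply, h1, h2, h3]

lemma lin_decomp {ℓ : R3} (h : ℓ.IsHomogeneous 1) :
    ℓ = C (coeff (Finsupp.single 0 1) ℓ) * X 0 + C (coeff (Finsupp.single 1 1) ℓ) * X 1
      + C (coeff (Finsupp.single 2 1) ℓ) * X 2 := by
  ext d
  rw [coeff_add, coeff_add, coeff_C_mul, coeff_C_mul, coeff_C_mul, coeff_X', coeff_X', coeff_X']
  have ne01 : (Finsupp.single (0 : Fin 3) (1 : ℕ)) ≠ Finsupp.single 1 1 := by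
    simp [Finsupp.single_eq_single_iff]
  have ne02 : (Finsupp.single (0 : Fin 3) (1 : ℕ)) ≠ Finsupp.single 2 1 := by
    simp [Finsupp.single_eq_single_iff]
  have ne12 : (Finsupp.single (1 : Fin 3) (1 : ℕ)) ≠ Finsupp.single 2 1 := by
    simp [Finsupp.single_eq_single_iff]
  by_cases e0 : d = Finsupp.single 0 1
  · subst e0
    rw [if_pos rfl, if_neg (fun hh => ne01 hh.symm), if_neg (fun hh => ne02 hh.symm)]
    ring
  by_cases e1 : d = Finsupp.single 1 1
  · subst e1
    rw [if_neg (fun hh => ne01 hh), if_pos rfl, if_neg (fun hh => ne12 hh.symm)]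
    ring
  by_cases e2 : d = Finsupp.single 2 1
  · subst e2
    rw [if_neg (fun hh => ne02 hh), if_neg (fun hh => ne12 hh), if_pos rfl]
    ring
  rw [if_neg (fun hh => e0 hh.symm), if_neg (fun hh => e1 hh.symm), if_neg (fun hh => e2 hh.symm)]
  have hdeg : d.degree ≠ 1 := by
    intro hdeg
    rcases deg_one_single hdeg with h'|h'|h' <;> [exact e0 h'; exact e1 h'; exact e2 h']
  rw [h.coeff_eq_zero hdeg]
  ring


lemma mem_span_six {u a b c d e f : R3} (h : u ∈ Ideal.span {a, b, c, d, e, f}) :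
    ∃ p1 p2 p3 p4 p5 p6 : R3,
      u = p1 * a + p2 * b + p3 * c + p4 * d + p5 * e + p6 * f := by
  rw [Ideal.mem_span_insert] at h; obtain ⟨p1, w1, h1, rfl⟩ := h
  rw [Ideal.mem_span_insert] at h1; obtain ⟨p2, w2, h2, rfl⟩ := h1
  rw [Ideal.mem_span_insert] at h2; obtain ⟨p3, w3, h3, rfl⟩ := h2
  rw [Ideal.mem_span_insert] at h3; obtain ⟨p4, w4, h4, rfl⟩ := h3
  rw [Ideal.mem_span_insert] at h4; obtain ⟨p5, w5, h5, rfl⟩ := h4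
  rw [Ideal.mem_span_singleton] at h5; obtain ⟨p6, rfl⟩ := h5
  exact ⟨p1, p2, p3, p4, p5, p6, by ring⟩

lemma span_sq_le :
    (Ideal.span {g1, g2, g3} : Ideal R3) ^ 2 ≤
      Ideal.span {g1 * g1, g1 * g2, g1 * g3, g2 * g2, g2 * g3, g3 * g3} := by
  rw [pow_two, Ideal.mul_le]
  intro r hr s hs
  have sub : ∀ u : R3, u ∈ ({g1 * g1, g1 * g2, g1 * g3, g2 * g2, g2 * g3, g3 * g3} : Set R3) →
      u ∈ Ideal.span {g1 * g1, g1 * g2, g1 * g3, g2 * g2, g2 * g3, g3 * g3} :=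
    fun u hu => Ideal.subset_span hu
  have mem : ∀ i j : R3, i ∈ ({g1, g2, g3} : Set R3) → j ∈ ({g1, g2, g3} : Set R3) →
      i * j ∈ Ideal.span {g1 * g1, g1 * g2, g1 * g3, g2 * g2, g2 * g3, g3 * g3} := by
    intro i j hi hj
    rcases hi with rfl|rfl|rfl <;> rcases hj with rfl|rfl|rfl
    · exact sub (g1 * g1) (by simp)
    · exact sub (g1 * g2) (by simp)
    · exact sub (g1 * g3) (by simp)
    · rw [mul_comm g2 g1]; exact sub (g1 * g2) (by simp)
    · exact sub (g2 * g2) (by simp)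
    · exact sub (g2 * g3) (by simp)
    · rw [mul_comm g3 g1]; exact sub (g1 * g3) (by simp)
    · rw [mul_comm g3 g2]; exact sub (g2 * g3) (by simp)
    · exact sub (g3 * g3) (by simp)
  refine Submodule.span_induction ?_ ?_ ?_ ?_ hr
  · intro i hi
    refine Submodule.span_induction ?_ ?_ ?_ ?_ hs
    · intro j hj; exact mem i j hi hj
    · rw [mul_zero]; exact Ideal.zero_mem _
    · intro u v _ _ h1 h2; rw [mul_add]; exact Ideal.add_mem _ h1 h2
    · intro a u _ h1
      rw [smul_eq_mul, ← mul_assoc, mul_comm i a, mul_assoc]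
      exact Ideal.mul_mem_left _ _ h1
  · rw [zero_mul]; exact Ideal.zero_mem _
  · intro u v _ _ h1 h2; rw [add_mul]; exact Ideal.add_mem _ h1 h2
  · intro a u _ h1; rw [smul_eq_mul, mul_assoc]; exact Ideal.mul_mem_left _ _ h1

lemma hom_g1 : g1.IsHomogeneous 4 := by
  have : g1 = X 0 * X 1 ^ 3 - X 0 * X 2 ^ 3 := by rw [g1]; ring
  rw [this]
  exact (((isHomogeneous_X ℂ 0).mul ((isHomogeneous_X ℂ 1).pow 3)).sub
    ((isHomogeneous_X ℂ 0).mul ((isHomogeneous_X ℂ 2).pow 3)))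
lemma hom_g2 : g2.IsHomogeneous 4 := by
  have : g2 = X 1 * X 0 ^ 3 - X 1 * X 2 ^ 3 := by rw [g2]; ring
  rw [this]
  exact (((isHomogeneous_X ℂ 1).mul ((isHomogeneous_X ℂ 0).pow 3)).sub
    ((isHomogeneous_X ℂ 1).mul ((isHomogeneous_X ℂ 2).pow 3)))
lemma hom_g3 : g3.IsHomogeneous 4 := by
  have : g3 = X 2 * X 0 ^ 3 - X 2 * X 1 ^ 3 := by rw [g3]; ring
  rw [this]
  exact (((isHomogeneous_X ℂ 2).mul ((isHomogeneous_X ℂ 0).pow 3)).sub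
    ((isHomogeneous_X ℂ 2).mul ((isHomogeneous_X ℂ 1).pow 3)))

def FF : R3 := (X 0 ^ 3 - X 1 ^ 3) * (X 0 ^ 3 - X 2 ^ 3) * (X 1 ^ 3 - X 2 ^ 3)

lemma hom_FF : FF.IsHomogeneous 9 := by
  have h1 : ((X 0 : R3) ^ 3 - X 1 ^ 3).IsHomogeneous 3 :=
    ((isHomogeneous_X ℂ 0).pow 3).sub ((isHomogeneous_X ℂ 1).pow 3)
  have h2 : ((X 0 : R3) ^ 3 - X 2 ^ 3).IsHomogeneous 3 :=
    ((isHomogeneous_X ℂ 0).pow 3).sub ((isHomogeneous_X ℂ 2).pow 3)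
  have h3 : ((X 1 : R3) ^ 3 - X 2 ^ 3).IsHomogeneous 3 :=
    ((isHomogeneous_X ℂ 1).pow 3).sub ((isHomogeneous_X ℂ 2).pow 3)
  exact (h1.mul h2).mul h3

set_option maxHeartbeats 3200000 in
lemma FF_notin_sq : FF ∉ (Ideal.span {g1, g2, g3} : Ideal R3) ^ 2 := by
  intro hF
  obtain ⟨q1, q2, q3, q4, q5, q6, hrep⟩ := mem_span_six (span_sq_le hF)
  have h9 := congrArg (homogeneousComponent 9) hrep
  rw [map_add, map_add, map_add, map_add, map_add] at h9
  rw [hc_mul q1 _ (hom_g1.mul hom_g1), hc_mul q2 _ (hom_g1.mul hom_g2),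
    hc_mul q3 _ (hom_g1.mul hom_g3), hc_mul q4 _ (hom_g2.mul hom_g2),
    hc_mul q5 _ (hom_g2.mul hom_g3), hc_mul q6 _ (hom_g3.mul hom_g3)] at h9
  rw [homogeneousComponent_of_mem ((mem_homogeneousSubmodule _ _).2 hom_FF), if_pos rfl] at h9
  obtain ⟨a1, b1, c1, e1⟩ : ∃ a b c : ℂ, homogeneousComponent 1 q1
      = C a * X 0 + C b * X 1 + C c * X 2 :=
    ⟨_, _, _, lin_decomp (homogeneousComponent_isHomogeneous 1 q1)⟩
  obtain ⟨a2, b2, c2, e2⟩ : ∃ a b c : ℂ, homogeneousComponent 1 q2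
      = C a * X 0 + C b * X 1 + C c * X 2 :=
    ⟨_, _, _, lin_decomp (homogeneousComponent_isHomogeneous 1 q2)⟩
  obtain ⟨a3, b3, c3, e3⟩ : ∃ a b c : ℂ, homogeneousComponent 1 q3
      = C a * X 0 + C b * X 1 + C c * X 2 :=
    ⟨_, _, _, lin_decomp (homogeneousComponent_isHomogeneous 1 q3)⟩
  obtain ⟨a4, b4, c4, e4⟩ : ∃ a b c : ℂ, homogeneousComponent 1 q4
      = C a * X 0 + C b * X 1 + C c * X 2 :=
    ⟨_, _, _, lin_decomp (homogeneousComponent_isHomogeneous 1 q4)⟩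
  obtain ⟨a5, b5, c5, e5⟩ : ∃ a b c : ℂ, homogeneousComponent 1 q5
      = C a * X 0 + C b * X 1 + C c * X 2 :=
    ⟨_, _, _, lin_decomp (homogeneousComponent_isHomogeneous 1 q5)⟩
  obtain ⟨a6, b6, c6, e6⟩ : ∃ a b c : ℂ, homogeneousComponent 1 q6
      = C a * X 0 + C b * X 1 + C c * X 2 :=
    ⟨_, _, _, lin_decomp (homogeneousComponent_isHomogeneous 1 q6)⟩
  rw [e1, e2, e3, e4, e5, e6, FF, g1, g2, g3] at h9
  have E0 := congrArg (eval ![(-1 : ℂ), -1, -2]) h9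
  have E1 := congrArg (eval ![(1 : ℂ), -2, -1]) h9
  have E2 := congrArg (eval ![(0 : ℂ), 2, -2]) h9
  have E3 := congrArg (eval ![(-2 : ℂ), 1, -1]) h9
  have E4 := congrArg (eval ![(-1 : ℂ), 2, 0]) h9
  have E5 := congrArg (eval ![(2 : ℂ), 1, 1]) h9
  have E6 := congrArg (eval ![(1 : ℂ), -2, 1]) h9
  have E7 := congrArg (eval ![(1 : ℂ), -1, -1]) h9
  have E8 := congrArg (eval ![(1 : ℂ), -2, -2]) h9
  have E9 := congrArg (eval ![(-2 : ℂ), -1, 1]) h9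
  have E10 := congrArg (eval ![(2 : ℂ), 1, 2]) h9
  have E11 := congrArg (eval ![(-2 : ℂ), -2, -1]) h9
  have E12 := congrArg (eval ![(2 : ℂ), -1, 1]) h9
  have E13 := congrArg (eval ![(2 : ℂ), 1, 0]) h9
  have E14 := congrArg (eval ![(-1 : ℂ), -1, 1]) h9
  have E15 := congrArg (eval ![(0 : ℂ), 2, -1]) h9
  have E16 := congrArg (eval ![(-1 : ℂ), -2, 2]) h9
  have E17 := congrArg (eval ![(-2 : ℂ), 2, 2]) h9
  have E18 := congrArg (eval ![(1 : ℂ), 1, 0]) h9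
  have E19 := congrArg (eval ![(2 : ℂ), 0, -2]) h9
  have E20 := congrArg (eval ![(2 : ℂ), 2, 0]) h9
  have E21 := congrArg (eval ![(2 : ℂ), 0, -1]) h9
  have E22 := congrArg (eval ![(2 : ℂ), -2, 2]) h9
  have E23 := congrArg (eval ![(0 : ℂ), -2, -2]) h9
  have E24 := congrArg (eval ![(1 : ℂ), -1, 0]) h9
  have E25 := congrArg (eval ![(-2 : ℂ), 1, 2]) h9
  have E26 := congrArg (eval ![(2 : ℂ), -1, 0]) h9
  have E27 := congrArg (eval ![(1 : ℂ), 2, 2]) h9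
  have E28 := congrArg (eval ![(1 : ℂ), 2, 1]) h9
  simp only [map_add, map_mul, map_sub, map_pow, eval_C, eval_X, Matrix.cons_val_zero, Matrix.cons_val_one, Matrix.head_cons, Matrix.cons_val_two, Matrix.tail_cons] at E0 E1 E2 E3 E4 E5 E6 E7 E8 E9 E10 E11 E12 E13 E14 E15 E16 E17 E18 E19 E20 E21 E22 E23 E24 E25 E26 E27 E28
  norm_num at E0 E1 E2 E3 E4 E5 E6 E7 E8 E9 E10 E11 E12 E13 E14 E15 E16 E17 E18 E19 E20 E21 E22 E23 E24 E25 E26 E27 E28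
  have contra : (-7162573824000 : ℂ) = 0 := by
    linear_combination (-20237021796 : ℂ) * E0 + (4895170560 : ℂ) * E1 + (3021553395 : ℂ) * E2 + (-3764849536 : ℂ) * E3 + (-13880788992 : ℂ) * E4 + (1506684108 : ℂ) * E5 + (343687029 : ℂ) * E6 + (7851441 : ℂ) * E7 + (-2260912871 : ℂ) * E8 + (-45206380800 : ℂ) * E9 + (-2384629767 : ℂ) * E10 + (-24998886805 : ℂ) * E11 + (3764849536 : ℂ) * E12 + (-87758125056 : ℂ) * E13 + (1141820393 : ℂ) * E14 + (-22732738560 : ℂ) * E15 + (-4606834176 : ℂ) * E16 + (-4019927650 : ℂ) * E17 + (-52636584 : ℂ) * E18 + (11942588700 : ℂ) * E19 + (-26949932919 : ℂ) * E20 + (-136545454080 : ℂ) * E21 + (231114870 : ℂ) * E22 + (-4577782566 : ℂ) * E23 + (-2585855784960 : ℂ) * E24 + (5982986240 : ℂ) * E25 + (11346800640 : ℂ) * E26 + (5642016736 : ℂ) * E27 + (-601671645 : ℂ) * E28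
  norm_num at contra

lemma g1_mem : g1 ∈ Ideal.span ({g1, g2, g3} : Set R3) := Ideal.subset_span (by simp)
lemma g2_mem : g2 ∈ Ideal.span ({g1, g2, g3} : Set R3) := Ideal.subset_span (by simp)
lemma g3_mem : g3 ∈ Ideal.span ({g1, g2, g3} : Set R3) := Ideal.subset_span (by simp)

lemma mem_I3 {u v w : R3} (hu : u ∈ Ideal.span ({g1, g2, g3} : Set R3))
    (hv : v ∈ Ideal.span ({g1, g2, g3} : Set R3))
    (hw : w ∈ Ideal.span ({g1, g2, g3} : Set R3)) (t : R3) :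
    t * (u * v * w) ∈ (Ideal.span ({g1, g2, g3} : Set R3)) ^ 3 := by
  have h3 : (Ideal.span ({g1, g2, g3} : Set R3)) ^ 3
      = Ideal.span ({g1, g2, g3} : Set R3) * Ideal.span ({g1, g2, g3} : Set R3)
        * Ideal.span ({g1, g2, g3} : Set R3) := by ring
  rw [h3]
  exact Ideal.mul_mem_left _ t (Ideal.mul_mem_mul (Ideal.mul_mem_mul hu hv) hw)

lemma cert0 : (X 0 : R3) ^ 4 * FF ∈ (Ideal.span ({g1, g2, g3} : Set R3)) ^ 3 := by
  have hid : (X 0 : R3) ^ 4 * FF = (-(X 1)) * (g1 * g2 * g2) + (-(X 2)) * (g1 * g3 * g3)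
      + (X 0) * (g2 * g2 * g2) + (-(X 0)) * (g3 * g3 * g3) := by
    simp only [FF, g1, g2, g3]; ring
  rw [hid]
  exact Ideal.add_mem _ (Ideal.add_mem _ (Ideal.add_mem _
    (mem_I3 g1_mem g2_mem g2_mem _) (mem_I3 g1_mem g3_mem g3_mem _))
    (mem_I3 g2_mem g2_mem g2_mem _)) (mem_I3 g3_mem g3_mem g3_mem _)

lemma cert1 : (X 1 : R3) ^ 4 * FF ∈ (Ideal.span ({g1, g2, g3} : Set R3)) ^ 3 := by
  have hid : (X 1 : R3) ^ 4 * FF = (-(X 1)) * (g1 * g1 * g1) + (X 0) * (g1 * g1 * g2)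
      + (X 2) * (g2 * g3 * g3) + (-(X 1)) * (g3 * g3 * g3) := by
    simp only [FF, g1, g2, g3]; ring
  rw [hid]
  exact Ideal.add_mem _ (Ideal.add_mem _ (Ideal.add_mem _
    (mem_I3 g1_mem g1_mem g1_mem _) (mem_I3 g1_mem g1_mem g2_mem _))
    (mem_I3 g2_mem g3_mem g3_mem _)) (mem_I3 g3_mem g3_mem g3_mem _)

lemma cert2 : (X 2 : R3) ^ 4 * FF ∈ (Ideal.span ({g1, g2, g3} : Set R3)) ^ 3 := by
  have hid : (X 2 : R3) ^ 4 * FF = (-(X 2)) * (g1 * g1 * g1) + (-(X 0)) * (g1 * g1 * g3)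
      + (X 2) * (g2 * g2 * g2) + (-(X 1)) * (g2 * g2 * g3) := by
    simp only [FF, g1, g2, g3]; ring
  rw [hid]
  exact Ideal.add_mem _ (Ideal.add_mem _ (Ideal.add_mem _
    (mem_I3 g1_mem g1_mem g1_mem _) (mem_I3 g1_mem g1_mem g3_mem _))
    (mem_I3 g2_mem g2_mem g2_mem _)) (mem_I3 g2_mem g2_mem g3_mem _)

lemma FF_in_symbolic : FF ∈ symbolicPower (Ideal.span ({g1, g2, g3} : Set R3)) 3 := by
  rw [symbolicPower, Ideal.mem_iInf]
  intro P
  rw [Ideal.mem_iInf]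
  intro hP
  letI : P.IsPrime := hP.1
  obtain ⟨hPprime, f, hPf⟩ := isAssociatedPrime_iff.1 hP
  by_cases hx : ∃ i : Fin 3, X i ∉ P
  · obtain ⟨i, hi⟩ := hx
    rw [Ideal.mem_comap]
    have hs : (X i : R3) ^ 4 ∉ P := fun h => hi (hPprime.mem_of_pow_mem _ h)
    have hcert : (X i : R3) ^ 4 * FF ∈ (Ideal.span ({g1, g2, g3} : Set R3)) ^ 3 := by
      fin_cases i
      · exact cert0
      · exact cert1
      · exact cert2
    have h1 := Ideal.mem_map_of_mem
      (algebraMap R3 (Localization.AtPrime P)) hcert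
    rw [map_mul] at h1
    have hu : IsUnit (algebraMap R3 (Localization.AtPrime P) ((X i : R3) ^ 4)) :=
      IsLocalization.map_units (M := P.primeCompl) (Localization.AtPrime P) ⟨(X i : R3) ^ 4, hs⟩
    exact (Ideal.unit_mul_mem_iff_mem _ hu).1 h1
  · exfalso
    push_neg at hx
    have hL : (X 0 - 2 * X 1 - 4 * X 2 : R3) ∈ P :=
      P.sub_mem (P.sub_mem (hx 0) (P.mul_mem_left 2 (hx 1))) (P.mul_mem_left 4 (hx 2))
    obtain ⟨f₀, rfl⟩ := Ideal.Quotient.mk_surjective f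
    have hann : (X 0 - 2 * X 1 - 4 * X 2 : R3)
        ∈ (Submodule.span R3 {Ideal.Quotient.mk (Ideal.span ({g1, g2, g3} : Set R3)) f₀}).annihilator := by
      rw [← Submodule.bot_colon', ← hPf]; exact hL
    have hzero := Submodule.mem_annihilator.1 hann _ (Submodule.mem_span_singleton_self _)
    have hmk : (Ideal.Quotient.mk (Ideal.span ({g1, g2, g3} : Set R3)))
        ((X 0 - 2 * X 1 - 4 * X 2 : R3) * f₀) = 0 := by
      rw [map_mul]
      exact hzero
    rw [Ideal.Quotient.eq_zero_iff_mem] at hmk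
    have hf₀ := nzd hmk
    have hf0 : (Ideal.Quotient.mk (Ideal.span ({g1, g2, g3} : Set R3))) f₀ = 0 :=
      Ideal.Quotient.eq_zero_iff_mem.2 hf₀
    have hPtop : P = ⊤ := by
      rw [hPf, hf0]
      simp [Submodule.annihilator_bot]
    exact hPprime.ne_top hPtop

/-- For the dual Hesse (Fermat) configuration ideal
`I = (x(y³−z³), y(x³−z³), z(x³−y³)) ⊆ ℂ[x,y,z]`, the form
`F = (x³−y³)(x³−z³)(y³−z³)` lies in `I^(3)` but not in `I²`; hence `I^(3) ⊄ I²`. -/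
theorem stmt13 :
    let x : MvPolynomial (Fin 3) ℂ := X 0
    let y : MvPolynomial (Fin 3) ℂ := X 1
    let z : MvPolynomial (Fin 3) ℂ := X 2
    let I : Ideal (MvPolynomial (Fin 3) ℂ) :=
      Ideal.span {x * (y ^ 3 - z ^ 3), y * (x ^ 3 - z ^ 3), z * (x ^ 3 - y ^ 3)}
    let F : MvPolynomial (Fin 3) ℂ := (x ^ 3 - y ^ 3) * (x ^ 3 - z ^ 3) * (y ^ 3 - z ^ 3)
    F ∈ symbolicPower I 3 ∧ F ∉ I ^ 2 ∧ ¬ symbolicPower I 3 ≤ I ^ 2 := by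
  intro x y z I F
  have hI : I = Ideal.span ({g1, g2, g3} : Set R3) := by
    simp only [I, x, y, z, g1, g2, g3]
  have hF : F = FF := by simp only [F, x, y, z, FF]
  have h1 : F ∈ symbolicPower I 3 := by rw [hI, hF]; exact FF_in_symbolic
  have h2 : F ∉ I ^ 2 := by rw [hI, hF]; exact FF_notin_sq
  exact ⟨h1, h2, fun hle => h2 (hle h1)⟩

end
end

section
/- Over the field K, an algebraically closed field containing Z/3Z, let I = (xy(x^2−y^2), xz(x^2−z^2), yz(y^2−z^2), x(x^2−y^2)(x^2−z^2)) ⊆ K[x,y,z]. Then the form F = x(x−z)(x+z)(x^2−y^2)((x−z)^2−y^2)((x+z)^2−y^2) belongs to I^{(3)} but F ∉ I^2; hence I^{(3)} ⊄ I^2. -/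
open MvPolynomial

set_option linter.unusedSectionVars false
set_option maxHeartbeats 1000000

namespace Stmt17

variable {K : Type*} [Field K] [CharP K 3]

private abbrev R3 (K : Type*) [Field K] := MvPolynomial (Fin 3) K

theorem mem_span_quad {A : Type*} [CommRing A] {a b c d p : A}
    (h : p ∈ Ideal.span {a, b, c, d}) :
    ∃ α β γ δ, p = α * a + β * b + γ * c + δ * d := by
  obtain ⟨α, w1, hw1, h1⟩ := Ideal.mem_span_insert.mp h
  obtain ⟨β, w2, hw2, h2⟩ := Ideal.mem_span_insert.mp hw1
  obtain ⟨γ, w3, hw3, h3⟩ := Ideal.mem_span_insert.mp hw2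
  obtain ⟨δ, h4⟩ := Ideal.mem_span_singleton.mp hw3
  exact ⟨α, β, γ, δ, by rw [h1, h2, h3, h4]; ring⟩

theorem dvd_sub_aeval (L : R3 K) (v : R3 K →ₐ[K] R3 K)
    (h : ∀ i, L ∣ X i - v (X i)) (p : R3 K) : L ∣ p - v p := by
  induction p using MvPolynomial.induction_on with
  | C a => simp
  | add p q hp hq =>
      have := dvd_add hp hq
      rw [map_add]
      calc L ∣ p - v p + (q - v q) := this
        _ = p + q - (v p + v q) := by ring
  | mul_X p i hp =>
      have key : p * X i - v (p * X i)
          = (p - v p) * X i + v p * (X i - v (X i)) := by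
        rw [map_mul]; ring
      rw [key]
      exact dvd_add (hp.mul_right _) ((h i).mul_left _)

theorem dvd_of_aeval_zero (L : R3 K) (v : R3 K →ₐ[K] R3 K)
    (h : ∀ i, L ∣ X i - v (X i)) (p : R3 K) (hp : v p = 0) : L ∣ p := by
  have := dvd_sub_aeval L v h p
  rwa [hp, sub_zero] at this

/-- The socle lemma: if `y*f ∈ I` and `z*f ∈ I` then `f ∈ I`. -/
theorem socle (f : R3 K)
    (hy : X 1 * f ∈ Ideal.span {X 0 * X 1 * ((X 0:R3 K) ^ 2 - X 1 ^ 2),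
        X 0 * X 2 * ((X 0:R3 K) ^ 2 - X 2 ^ 2), X 1 * X 2 * ((X 1:R3 K) ^ 2 - X 2 ^ 2),
        X 0 * ((X 0:R3 K) ^ 2 - X 1 ^ 2) * ((X 0:R3 K) ^ 2 - X 2 ^ 2)})
    (hz : X 2 * f ∈ Ideal.span {X 0 * X 1 * ((X 0:R3 K) ^ 2 - X 1 ^ 2),
        X 0 * X 2 * ((X 0:R3 K) ^ 2 - X 2 ^ 2), X 1 * X 2 * ((X 1:R3 K) ^ 2 - X 2 ^ 2),
        X 0 * ((X 0:R3 K) ^ 2 - X 1 ^ 2) * ((X 0:R3 K) ^ 2 - X 2 ^ 2)}) :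
    f ∈ Ideal.span {X 0 * X 1 * ((X 0:R3 K) ^ 2 - X 1 ^ 2),
        X 0 * X 2 * ((X 0:R3 K) ^ 2 - X 2 ^ 2), X 1 * X 2 * ((X 1:R3 K) ^ 2 - X 2 ^ 2),
        X 0 * ((X 0:R3 K) ^ 2 - X 1 ^ 2) * ((X 0:R3 K) ^ 2 - X 2 ^ 2)} := by
  -- substitution endomorphisms
  set pi0 : R3 K →ₐ[K] R3 K := aeval ![0, X 1, X 2] with hpi0
  set pi1 : R3 K →ₐ[K] R3 K := aeval ![X 0, 0, X 2] with hpi1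
  set pi2 : R3 K →ₐ[K] R3 K := aeval ![X 0, X 1, 0] with hpi2
  set sxy : R3 K →ₐ[K] R3 K := aeval ![X 1, X 1, X 2] with hsxy
  set txy : R3 K →ₐ[K] R3 K := aeval ![-X 1, X 1, X 2] with htxy
  set sxz : R3 K →ₐ[K] R3 K := aeval ![X 2, X 1, X 2] with hsxz
  set txz : R3 K →ₐ[K] R3 K := aeval ![-X 2, X 1, X 2] with htxz
  set syz : R3 K →ₐ[K] R3 K := aeval ![X 0, X 2, X 2] with hsyz
  set tyz : R3 K →ₐ[K] R3 K := aeval ![X 0, -X 2, X 2] with htyz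
  have dpi0 : ∀ i, (X 0 : R3 K) ∣ X i - pi0 (X i) := by
    intro i; fin_cases i <;> simp [hpi0]
  have dpi1 : ∀ i, (X 1 : R3 K) ∣ X i - pi1 (X i) := by
    intro i; fin_cases i <;> simp [hpi1]
  have dpi2 : ∀ i, (X 2 : R3 K) ∣ X i - pi2 (X i) := by
    intro i; fin_cases i <;> simp [hpi2]
  have dsxy : ∀ i, (X 0 - X 1 : R3 K) ∣ X i - sxy (X i) := by
    intro i; fin_cases i <;> simp [hsxy]
  have dtxy : ∀ i, (X 0 + X 1 : R3 K) ∣ X i - txy (X i) := by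
    intro i; fin_cases i <;> simp [htxy, sub_neg_eq_add]
  have dsxz : ∀ i, (X 0 - X 2 : R3 K) ∣ X i - sxz (X i) := by
    intro i; fin_cases i <;> simp [hsxz]
  have dtxz : ∀ i, (X 0 + X 2 : R3 K) ∣ X i - txz (X i) := by
    intro i; fin_cases i <;> simp [htxz, sub_neg_eq_add]
  have dsyz : ∀ i, (X 1 - X 2 : R3 K) ∣ X i - syz (X i) := by
    intro i; fin_cases i <;> simp [hsyz]
  have dtyz : ∀ i, (X 1 + X 2 : R3 K) ∣ X i - tyz (X i) := by
    intro i; fin_cases i <;> simp [htyz, sub_neg_eq_add]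

  -- values of the substitutions on variables
  have p0X0 : pi0 (X 0 : R3 K) = 0 := by simp [hpi0]
  have p0X1 : pi0 (X 1 : R3 K) = X 1 := by simp [hpi0]
  have p0X2 : pi0 (X 2 : R3 K) = X 2 := by simp [hpi0]
  have p1X0 : pi1 (X 0 : R3 K) = X 0 := by simp [hpi1]
  have p1X1 : pi1 (X 1 : R3 K) = 0 := by simp [hpi1]
  have p1X2 : pi1 (X 2 : R3 K) = X 2 := by simp [hpi1]
  have p2X0 : pi2 (X 0 : R3 K) = X 0 := by simp [hpi2]
  have p2X1 : pi2 (X 1 : R3 K) = X 1 := by simp [hpi2]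
  have p2X2 : pi2 (X 2 : R3 K) = 0 := by simp [hpi2]
  have sxyX0 : sxy (X 0 : R3 K) = X 1 := by simp [hsxy]
  have sxyX1 : sxy (X 1 : R3 K) = X 1 := by simp [hsxy]
  have sxyX2 : sxy (X 2 : R3 K) = X 2 := by simp [hsxy]
  have txyX0 : txy (X 0 : R3 K) = -X 1 := by simp [htxy]
  have txyX1 : txy (X 1 : R3 K) = X 1 := by simp [htxy]
  have txyX2 : txy (X 2 : R3 K) = X 2 := by simp [htxy]
  have sxzX0 : sxz (X 0 : R3 K) = X 2 := by simp [hsxz]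
  have sxzX1 : sxz (X 1 : R3 K) = X 1 := by simp [hsxz]
  have sxzX2 : sxz (X 2 : R3 K) = X 2 := by simp [hsxz]
  have txzX0 : txz (X 0 : R3 K) = -X 2 := by simp [htxz]
  have txzX1 : txz (X 1 : R3 K) = X 1 := by simp [htxz]
  have txzX2 : txz (X 2 : R3 K) = X 2 := by simp [htxz]
  have syzX0 : syz (X 0 : R3 K) = X 0 := by simp [hsyz]
  have syzX1 : syz (X 1 : R3 K) = X 2 := by simp [hsyz]
  have syzX2 : syz (X 2 : R3 K) = X 2 := by simp [hsyz]
  have tyzX0 : tyz (X 0 : R3 K) = X 0 := by simp [htyz]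
  have tyzX1 : tyz (X 1 : R3 K) = -X 2 := by simp [htyz]
  have tyzX2 : tyz (X 2 : R3 K) = X 2 := by simp [htyz]
  -- nonzero facts
  have hne : ∀ (p : R3 K) (pt : Fin 3 → K), eval pt p = 1 → p ≠ 0 := by
    intro p pt h h0
    rw [h0, map_zero] at h
    exact zero_ne_one h
  have hX0ne : (X 0 : R3 K) ≠ 0 := hne _ ![1,0,0] (by simp)
  have hX1ne : (X 1 : R3 K) ≠ 0 := hne _ ![0,1,0] (by simp)
  have hX2ne : (X 2 : R3 K) ≠ 0 := hne _ ![0,0,1] (by simp)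
  have hcne : (X 0 * ((X 0:R3 K) ^ 2 - X 2 ^ 2)) ≠ 0 := hne _ ![1,0,0] (by simp)
  have hane : (X 0 * ((X 0:R3 K) ^ 2 - X 1 ^ 2)) ≠ 0 := hne _ ![1,0,0] (by simp)
  have hxmyne : ((X 0:R3 K) - X 1) ≠ 0 := hne _ ![1,0,0] (by simp)
  have hxmzne : ((X 0:R3 K) - X 2) ≠ 0 := hne _ ![1,0,0] (by simp)
  have hyzne : ((X 1:R3 K) ^ 2 - X 2 ^ 2) ≠ 0 := hne _ ![0,1,0] (by simp)
  have hxzsqne : ((X 0:R3 K) ^ 2 - X 2 ^ 2) ≠ 0 := hne _ ![1,0,0] (by simp)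
  have h3R : (3 : R3 K) = 0 := by
    have h1 : (3 : R3 K) = C (3 : K) := (map_ofNat C 3).symm
    rw [h1, show (3:K) = 0 from by exact_mod_cast CharP.cast_eq_zero K 3, map_zero]
  -- Phase A : from y*f ∈ I deduce f = A0*a + B0*b
  obtain ⟨α, β, γ, δ, hA⟩ := mem_span_quad hy
  have e1 : X 1 * (f - α * (X 0 * ((X 0:R3 K) ^ 2 - X 1 ^ 2))
        - γ * (X 2 * ((X 1:R3 K) ^ 2 - X 2 ^ 2)))
      = (X 0 * ((X 0:R3 K) ^ 2 - X 2 ^ 2)) * (β * X 2 + δ * ((X 0:R3 K) ^ 2 - X 1 ^ 2)) := by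
    linear_combination hA
  have e2 := congrArg pi1 e1
  simp only [map_mul, map_sub, map_add, map_pow, p1X0, p1X1, p1X2] at e2
  have e3 : (X 0 * ((X 0:R3 K) ^ 2 - X 2 ^ 2))
      * (pi1 β * X 2 + pi1 δ * ((X 0:R3 K) ^ 2)) = 0 := by
    linear_combination -e2
  have hM0 : pi1 (β * X 2 + δ * ((X 0:R3 K) ^ 2 - X 1 ^ 2)) = 0 := by
    have h := (mul_eq_zero.mp e3).resolve_left hcne
    simp only [map_add, map_mul, map_sub, map_pow, p1X0, p1X1, p1X2]
    linear_combination h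
  obtain ⟨w, hw⟩ := dvd_of_aeval_zero _ pi1 dpi1 _ hM0
  have e4 := congrArg pi2 hw
  simp only [map_add, map_mul, map_sub, map_pow, p2X0, p2X1, p2X2] at e4
  have e5 : X 1 * pi2 w = pi2 δ * ((X 0:R3 K) ^ 2 - X 1 ^ 2) := by linear_combination -e4
  have e6 := congrArg sxy e5
  simp only [map_mul, map_sub, map_pow, sxyX0, sxyX1, sxyX2] at e6
  have e7 : sxy (pi2 w) = 0 := mul_left_cancel₀ hX1ne (by linear_combination e6)
  obtain ⟨q1, hq1⟩ := dvd_of_aeval_zero _ sxy dsxy _ e7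
  have e8 : ((X 0:R3 K) - X 1) * (X 1 * q1) = ((X 0:R3 K) - X 1) * (pi2 δ * (X 0 + X 1)) := by
    linear_combination e5 - X 1 * hq1
  have e9 : X 1 * q1 = pi2 δ * ((X 0:R3 K) + X 1) := mul_left_cancel₀ hxmyne e8
  have e10 := congrArg txy e9
  simp only [map_mul, map_add, txyX0, txyX1, txyX2] at e10
  have e11 : txy q1 = 0 := mul_left_cancel₀ hX1ne (by linear_combination e10)
  obtain ⟨q2, hq2⟩ := dvd_of_aeval_zero _ txy dtxy _ e11
  obtain ⟨w3, hw3⟩ := dvd_sub_aeval (X 2) pi2 dpi2 w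
  have hcw : f - α * (X 0 * ((X 0:R3 K) ^ 2 - X 1 ^ 2))
        - γ * (X 2 * ((X 1:R3 K) ^ 2 - X 2 ^ 2))
      = (X 0 * ((X 0:R3 K) ^ 2 - X 2 ^ 2)) * w :=
    mul_left_cancel₀ hX1ne
      (by linear_combination e1 + (X 0 * ((X 0:R3 K) ^ 2 - X 2 ^ 2)) * hw)
  have hS1 : f = (α + ((X 0:R3 K) ^ 2 - X 2 ^ 2) * q2 + X 2 * w3)
        * (X 0 * ((X 0:R3 K) ^ 2 - X 1 ^ 2))
      + (γ + X 0 * w3) * (X 2 * ((X 1:R3 K) ^ 2 - X 2 ^ 2)) := by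
    linear_combination hcw
      + (X 0 * ((X 0:R3 K) ^ 2 - X 2 ^ 2)) * (hw3 + hq1 + ((X 0:R3 K) - X 1) * hq2)
  -- Phase B : from z*f ∈ I deduce f = C0*c + D0*d
  obtain ⟨a2, b2, c2, d2, hB⟩ := mem_span_quad hz
  have f1 : X 2 * (f - b2 * (X 0 * ((X 0:R3 K) ^ 2 - X 2 ^ 2))
        - c2 * (X 1 * ((X 1:R3 K) ^ 2 - X 2 ^ 2)))
      = (X 0 * ((X 0:R3 K) ^ 2 - X 1 ^ 2)) * (a2 * X 1 + d2 * ((X 0:R3 K) ^ 2 - X 2 ^ 2)) := by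
    linear_combination hB
  have f2 := congrArg pi2 f1
  simp only [map_mul, map_sub, map_add, map_pow, p2X0, p2X1, p2X2] at f2
  have f3 : (X 0 * ((X 0:R3 K) ^ 2 - X 1 ^ 2))
      * (pi2 a2 * X 1 + pi2 d2 * ((X 0:R3 K) ^ 2)) = 0 := by
    linear_combination -f2
  have hN0 : pi2 (a2 * X 1 + d2 * ((X 0:R3 K) ^ 2 - X 2 ^ 2)) = 0 := by
    have h := (mul_eq_zero.mp f3).resolve_left hane
    simp only [map_add, map_mul, map_sub, map_pow, p2X0, p2X1, p2X2]
    linear_combination h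
  obtain ⟨v, hv⟩ := dvd_of_aeval_zero _ pi2 dpi2 _ hN0
  have f4 := congrArg pi1 hv
  simp only [map_add, map_mul, map_sub, map_pow, p1X0, p1X1, p1X2] at f4
  have f5 : X 2 * pi1 v = pi1 d2 * ((X 0:R3 K) ^ 2 - X 2 ^ 2) := by linear_combination -f4
  have f6 := congrArg sxz f5
  simp only [map_mul, map_sub, map_pow, sxzX0, sxzX1, sxzX2] at f6
  have f7 : sxz (pi1 v) = 0 := mul_left_cancel₀ hX2ne (by linear_combination f6)
  obtain ⟨v1, hv1⟩ := dvd_of_aeval_zero _ sxz dsxz _ f7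
  have f8 : ((X 0:R3 K) - X 2) * (X 2 * v1) = ((X 0:R3 K) - X 2) * (pi1 d2 * (X 0 + X 2)) := by
    linear_combination f5 - X 2 * hv1
  have f9 : X 2 * v1 = pi1 d2 * ((X 0:R3 K) + X 2) := mul_left_cancel₀ hxmzne f8
  have f10 := congrArg txz f9
  simp only [map_mul, map_add, txzX0, txzX1, txzX2] at f10
  have f11 : txz v1 = 0 := mul_left_cancel₀ hX2ne (by linear_combination f10)
  obtain ⟨v2, hv2⟩ := dvd_of_aeval_zero _ txz dtxz _ f11
  obtain ⟨v3, hv3⟩ := dvd_sub_aeval (X 1) pi1 dpi1 v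
  have hcv : f - b2 * (X 0 * ((X 0:R3 K) ^ 2 - X 2 ^ 2))
        - c2 * (X 1 * ((X 1:R3 K) ^ 2 - X 2 ^ 2))
      = (X 0 * ((X 0:R3 K) ^ 2 - X 1 ^ 2)) * v :=
    mul_left_cancel₀ hX2ne
      (by linear_combination f1 + (X 0 * ((X 0:R3 K) ^ 2 - X 1 ^ 2)) * hv)
  have hS2 : f = (b2 + ((X 0:R3 K) ^ 2 - X 1 ^ 2) * v2 + X 1 * v3)
        * (X 0 * ((X 0:R3 K) ^ 2 - X 2 ^ 2))
      + (c2 - X 0 * v3) * (X 1 * ((X 1:R3 K) ^ 2 - X 2 ^ 2)) := by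
    linear_combination hcv
      + (X 0 * ((X 0:R3 K) ^ 2 - X 1 ^ 2)) * (hv3 + hv1 + ((X 0:R3 K) - X 2) * hv2)
  -- Phase C
  set A0 := α + ((X 0:R3 K) ^ 2 - X 2 ^ 2) * q2 + X 2 * w3 with hA0def
  set B0 := γ + X 0 * w3 with hB0def
  set C0 := b2 + ((X 0:R3 K) ^ 2 - X 1 ^ 2) * v2 + X 1 * v3 with hC0def
  set D0 := c2 - X 0 * v3 with hD0def
  clear hA0def hB0def hC0def hD0def
  have p1f : pi0 f = pi0 B0 * (X 2 * ((X 1:R3 K) ^ 2 - X 2 ^ 2)) := by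
    rw [hS1]
    simp only [map_add, map_mul, map_sub, map_pow, p0X0, p0X1, p0X2]
    ring
  have p2f : pi0 f = pi0 D0 * (X 1 * ((X 1:R3 K) ^ 2 - X 2 ^ 2)) := by
    rw [hS2]
    simp only [map_add, map_mul, map_sub, map_pow, p0X0, p0X1, p0X2]
    ring
  have hC2 : X 2 * pi0 B0 * ((X 1:R3 K) ^ 2 - X 2 ^ 2)
      = X 1 * pi0 D0 * ((X 1:R3 K) ^ 2 - X 2 ^ 2) := by
    linear_combination p2f - p1f
  have hC3 : X 2 * pi0 B0 = X 1 * pi0 D0 := mul_right_cancel₀ hyzne hC2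
  have hC4 := congrArg pi1 hC3
  simp only [map_mul, p1X1, p1X2] at hC4
  have hC5 : pi1 (pi0 B0) = 0 := mul_left_cancel₀ hX2ne (by linear_combination hC4)
  obtain ⟨u, hu⟩ := dvd_of_aeval_zero _ pi1 dpi1 _ hC5
  have hDu : pi0 D0 = X 2 * u :=
    mul_left_cancel₀ hX1ne (by linear_combination X 2 * hu - hC3)
  obtain ⟨B1, hB1⟩ := dvd_sub_aeval (X 0) pi0 dpi0 B0
  obtain ⟨D1, hD1⟩ := dvd_sub_aeval (X 0) pi0 dpi0 D0
  have hg1 : f - u * (X 1 * X 2 * ((X 1:R3 K) ^ 2 - X 2 ^ 2))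
      = A0 * (X 0 * ((X 0:R3 K) ^ 2 - X 1 ^ 2))
        + X 0 * (B1 * (X 2 * ((X 1:R3 K) ^ 2 - X 2 ^ 2))) := by
    linear_combination hS1 + (X 2 * ((X 1:R3 K) ^ 2 - X 2 ^ 2)) * (hB1 + hu)
  have hg2 : f - u * (X 1 * X 2 * ((X 1:R3 K) ^ 2 - X 2 ^ 2))
      = C0 * (X 0 * ((X 0:R3 K) ^ 2 - X 2 ^ 2))
        + X 0 * (D1 * (X 1 * ((X 1:R3 K) ^ 2 - X 2 ^ 2))) := by
    linear_combination hS2 + (X 1 * ((X 1:R3 K) ^ 2 - X 2 ^ 2)) * (hD1 + hDu)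
  have hg0 : pi0 (f - u * (X 1 * X 2 * ((X 1:R3 K) ^ 2 - X 2 ^ 2))) = 0 := by
    rw [hg1]
    simp only [map_add, map_mul, map_sub, map_pow, p0X0, p0X1, p0X2]
    ring
  obtain ⟨h, hh⟩ := dvd_of_aeval_zero _ pi0 dpi0 _ hg0
  have he1 : h = A0 * ((X 0:R3 K) ^ 2 - X 1 ^ 2)
      + B1 * (X 2 * ((X 1:R3 K) ^ 2 - X 2 ^ 2)) :=
    mul_left_cancel₀ hX0ne (by linear_combination hg1 - hh)
  have he2 : h = C0 * ((X 0:R3 K) ^ 2 - X 2 ^ 2)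
      + D1 * (X 1 * ((X 1:R3 K) ^ 2 - X 2 ^ 2)) :=
    mul_left_cancel₀ hX0ne (by linear_combination hg2 - hh)
  have he : A0 * ((X 0:R3 K) ^ 2 - X 1 ^ 2) - C0 * ((X 0:R3 K) ^ 2 - X 2 ^ 2)
      + B1 * (X 2 * ((X 1:R3 K) ^ 2 - X 2 ^ 2))
      - D1 * (X 1 * ((X 1:R3 K) ^ 2 - X 2 ^ 2)) = 0 := by
    linear_combination he2 - he1
  have j1 := congrArg syz he
  simp only [map_add, map_sub, map_mul, map_pow, syzX0, syzX1, syzX2, map_zero] at j1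
  have j2 : ((X 0:R3 K) ^ 2 - X 2 ^ 2) * (syz A0 - syz C0) = 0 := by linear_combination j1
  have j3 : syz (A0 - C0) = 0 := by
    rw [map_sub]; exact (mul_eq_zero.mp j2).resolve_left hxzsqne
  obtain ⟨s, hs⟩ := dvd_of_aeval_zero _ syz dsyz _ j3
  have j4 := congrArg tyz he
  simp only [map_add, map_sub, map_mul, map_pow, tyzX0, tyzX1, tyzX2, map_zero] at j4
  have j5 : tyz A0 - tyz C0 = 0 := by
    have j2' : ((X 0:R3 K) ^ 2 - X 2 ^ 2) * (tyz A0 - tyz C0) = 0 := by linear_combination j4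
    exact (mul_eq_zero.mp j2').resolve_left hxzsqne
  have j6 := congrArg tyz hs
  simp only [map_sub, map_mul, tyzX1, tyzX2] at j6
  have j7 : X 2 * tyz s = 0 := by
    linear_combination j5 - j6 + (X 2 * tyz s) * h3R
  have j8 : tyz s = 0 := (mul_eq_zero.mp j7).resolve_left hX2ne
  obtain ⟨t, ht⟩ := dvd_of_aeval_zero _ tyz dtyz _ j8
  have hyy : ((X 1:R3 K) ^ 2 - X 2 ^ 2)
      * (t * ((X 0:R3 K) ^ 2 - X 1 ^ 2) - C0 + B1 * X 2 - D1 * X 1) = 0 := by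
    linear_combination he - ((X 0:R3 K) ^ 2 - X 1 ^ 2) * hs
      - ((X 0:R3 K) ^ 2 - X 1 ^ 2) * ((X 1:R3 K) - X 2) * ht
  have hCfin : t * ((X 0:R3 K) ^ 2 - X 1 ^ 2) - C0 + B1 * X 2 - D1 * X 1 = 0 :=
    (mul_eq_zero.mp hyy).resolve_left hyzne
  have hfin : f = (-D1) * (X 0 * X 1 * ((X 0:R3 K) ^ 2 - X 1 ^ 2))
      + B1 * (X 0 * X 2 * ((X 0:R3 K) ^ 2 - X 2 ^ 2))
      + u * (X 1 * X 2 * ((X 1:R3 K) ^ 2 - X 2 ^ 2))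
      + t * (X 0 * ((X 0:R3 K) ^ 2 - X 1 ^ 2) * ((X 0:R3 K) ^ 2 - X 2 ^ 2)) := by
    linear_combination hh + X 0 * he2 - (X 0 * ((X 0:R3 K) ^ 2 - X 2 ^ 2)) * hCfin
  rw [hfin]
  refine Ideal.add_mem _ (Ideal.add_mem _ (Ideal.add_mem _ ?_ ?_) ?_) ?_ <;>
    exact Ideal.mul_mem_left _ _ (Ideal.subset_span (by simp))

theorem three_eq_zero : (3 : R3 K) = 0 := by
  have h1 : (3 : R3 K) = C (3 : K) := (map_ofNat C 3).symm
  rw [h1, show (3:K) = 0 from by exact_mod_cast CharP.cast_eq_zero K 3, map_zero]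

theorem cube_mem {A : Type*} [CommRing A] (I : Ideal A) {p q r : A}
    (hp : p ∈ I) (hq : q ∈ I) (hr : r ∈ I) : p * q * r ∈ I ^ 3 := by
  have h : I ^ 3 = I * I * I := by ring
  rw [h]
  exact Ideal.mul_mem_mul (Ideal.mul_mem_mul hp hq) hr

theorem certY : (X 1 : R3 K) ^ 3
    * (X 0 * (X 0 - X 2) * (X 0 + X 2) * ((X 0:R3 K) ^ 2 - X 1 ^ 2)
      * ((X 0 - X 2) ^ 2 - X 1 ^ 2) * ((X 0 + X 2) ^ 2 - X 1 ^ 2))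
    ∈ (Ideal.span {X 0 * X 1 * ((X 0:R3 K) ^ 2 - X 1 ^ 2),
        X 0 * X 2 * ((X 0:R3 K) ^ 2 - X 2 ^ 2), X 1 * X 2 * ((X 1:R3 K) ^ 2 - X 2 ^ 2),
        X 0 * ((X 0:R3 K) ^ 2 - X 1 ^ 2) * ((X 0:R3 K) ^ 2 - X 2 ^ 2)}) ^ 3 := by
  have h1 : (X 0 * X 1 * ((X 0:R3 K) ^ 2 - X 1 ^ 2)) ∈ Ideal.span {X 0 * X 1 * ((X 0:R3 K) ^ 2 - X 1 ^ 2),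
        X 0 * X 2 * ((X 0:R3 K) ^ 2 - X 2 ^ 2), X 1 * X 2 * ((X 1:R3 K) ^ 2 - X 2 ^ 2),
        X 0 * ((X 0:R3 K) ^ 2 - X 1 ^ 2) * ((X 0:R3 K) ^ 2 - X 2 ^ 2)} :=
    Ideal.subset_span (by simp)
  have h3 : (X 1 * X 2 * ((X 1:R3 K) ^ 2 - X 2 ^ 2)) ∈ Ideal.span {X 0 * X 1 * ((X 0:R3 K) ^ 2 - X 1 ^ 2),
        X 0 * X 2 * ((X 0:R3 K) ^ 2 - X 2 ^ 2), X 1 * X 2 * ((X 1:R3 K) ^ 2 - X 2 ^ 2),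
        X 0 * ((X 0:R3 K) ^ 2 - X 1 ^ 2) * ((X 0:R3 K) ^ 2 - X 2 ^ 2)} :=
    Ideal.subset_span (by simp)
  have key : (X 1 : R3 K) ^ 3
      * (X 0 * (X 0 - X 2) * (X 0 + X 2) * ((X 0:R3 K) ^ 2 - X 1 ^ 2)
        * ((X 0 - X 2) ^ 2 - X 1 ^ 2) * ((X 0 + X 2) ^ 2 - X 1 ^ 2))
      = (X 0 * X 1 * ((X 0:R3 K) ^ 2 - X 1 ^ 2)) * (X 0 * X 1 * ((X 0:R3 K) ^ 2 - X 1 ^ 2))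
          * (X 0 * X 1 * ((X 0:R3 K) ^ 2 - X 1 ^ 2))
        - (X 0 * X 1 * ((X 0:R3 K) ^ 2 - X 1 ^ 2)) * (X 1 * X 2 * ((X 1:R3 K) ^ 2 - X 2 ^ 2))
          * (X 1 * X 2 * ((X 1:R3 K) ^ 2 - X 2 ^ 2)) := by
    linear_combination (-(X 0:R3 K) ^ 3 * X 1 ^ 5 * X 2 ^ 4 + X 0 ^ 5 * X 1 ^ 3 * X 2 ^ 4
      + X 0 ^ 5 * X 1 ^ 5 * X 2 ^ 2 - X 0 ^ 7 * X 1 ^ 3 * X 2 ^ 2) * (three_eq_zero (K := K))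
  rw [key]
  exact sub_mem (cube_mem _ h1 h1 h1) (cube_mem _ h1 h3 h3)

theorem certZ : (X 2 : R3 K) ^ 3
    * (X 0 * (X 0 - X 2) * (X 0 + X 2) * ((X 0:R3 K) ^ 2 - X 1 ^ 2)
      * ((X 0 - X 2) ^ 2 - X 1 ^ 2) * ((X 0 + X 2) ^ 2 - X 1 ^ 2))
    ∈ (Ideal.span {X 0 * X 1 * ((X 0:R3 K) ^ 2 - X 1 ^ 2),
        X 0 * X 2 * ((X 0:R3 K) ^ 2 - X 2 ^ 2), X 1 * X 2 * ((X 1:R3 K) ^ 2 - X 2 ^ 2),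
        X 0 * ((X 0:R3 K) ^ 2 - X 1 ^ 2) * ((X 0:R3 K) ^ 2 - X 2 ^ 2)}) ^ 3 := by
  have h2 : (X 0 * X 2 * ((X 0:R3 K) ^ 2 - X 2 ^ 2)) ∈ Ideal.span {X 0 * X 1 * ((X 0:R3 K) ^ 2 - X 1 ^ 2),
        X 0 * X 2 * ((X 0:R3 K) ^ 2 - X 2 ^ 2), X 1 * X 2 * ((X 1:R3 K) ^ 2 - X 2 ^ 2),
        X 0 * ((X 0:R3 K) ^ 2 - X 1 ^ 2) * ((X 0:R3 K) ^ 2 - X 2 ^ 2)} :=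
    Ideal.subset_span (by simp)
  have h3 : (X 1 * X 2 * ((X 1:R3 K) ^ 2 - X 2 ^ 2)) ∈ Ideal.span {X 0 * X 1 * ((X 0:R3 K) ^ 2 - X 1 ^ 2),
        X 0 * X 2 * ((X 0:R3 K) ^ 2 - X 2 ^ 2), X 1 * X 2 * ((X 1:R3 K) ^ 2 - X 2 ^ 2),
        X 0 * ((X 0:R3 K) ^ 2 - X 1 ^ 2) * ((X 0:R3 K) ^ 2 - X 2 ^ 2)} :=
    Ideal.subset_span (by simp)
  have key : (X 2 : R3 K) ^ 3
      * (X 0 * (X 0 - X 2) * (X 0 + X 2) * ((X 0:R3 K) ^ 2 - X 1 ^ 2)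
        * ((X 0 - X 2) ^ 2 - X 1 ^ 2) * ((X 0 + X 2) ^ 2 - X 1 ^ 2))
      = (X 0 * X 2 * ((X 0:R3 K) ^ 2 - X 2 ^ 2)) * (X 0 * X 2 * ((X 0:R3 K) ^ 2 - X 2 ^ 2))
          * (X 0 * X 2 * ((X 0:R3 K) ^ 2 - X 2 ^ 2))
        - (X 0 * X 2 * ((X 0:R3 K) ^ 2 - X 2 ^ 2)) * (X 1 * X 2 * ((X 1:R3 K) ^ 2 - X 2 ^ 2))
          * (X 1 * X 2 * ((X 1:R3 K) ^ 2 - X 2 ^ 2)) := by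
    linear_combination (-(X 0:R3 K) ^ 3 * X 1 ^ 4 * X 2 ^ 5 + X 0 ^ 5 * X 1 ^ 2 * X 2 ^ 5
      + X 0 ^ 5 * X 1 ^ 4 * X 2 ^ 3 - X 0 ^ 7 * X 1 ^ 2 * X 2 ^ 3) * (three_eq_zero (K := K))
  rw [key]
  exact sub_mem (cube_mem _ h2 h2 h2) (cube_mem _ h2 h3 h3)

theorem notI2 : (X 0 * (X 0 - X 2) * (X 0 + X 2) * ((X 0:R3 K) ^ 2 - X 1 ^ 2)
      * ((X 0 - X 2) ^ 2 - X 1 ^ 2) * ((X 0 + X 2) ^ 2 - X 1 ^ 2))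
    ∉ (Ideal.span {X 0 * X 1 * ((X 0:R3 K) ^ 2 - X 1 ^ 2),
        X 0 * X 2 * ((X 0:R3 K) ^ 2 - X 2 ^ 2), X 1 * X 2 * ((X 1:R3 K) ^ 2 - X 2 ^ 2),
        X 0 * ((X 0:R3 K) ^ 2 - X 1 ^ 2) * ((X 0:R3 K) ^ 2 - X 2 ^ 2)}) ^ 2 := by
  intro hF
  set ψ : R3 K →ₐ[K] Polynomial K := aeval ![Polynomial.X, 0, 0] with hψ
  have hmap : Ideal.map ψ ((Ideal.span {X 0 * X 1 * ((X 0:R3 K) ^ 2 - X 1 ^ 2),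
        X 0 * X 2 * ((X 0:R3 K) ^ 2 - X 2 ^ 2), X 1 * X 2 * ((X 1:R3 K) ^ 2 - X 2 ^ 2),
        X 0 * ((X 0:R3 K) ^ 2 - X 1 ^ 2) * ((X 0:R3 K) ^ 2 - X 2 ^ 2)}) ^ 2)
      ≤ (Ideal.span {(Polynomial.X : Polynomial K) ^ 5}) ^ 2 := by
    rw [Ideal.map_pow]
    refine Ideal.pow_right_mono ?_ 2
    rw [Ideal.map_span, Ideal.span_le]
    rintro q ⟨p, hp, rfl⟩
    simp only [Set.mem_insert_iff, Set.mem_singleton_iff] at hp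
    have hX5 : ∀ r : Polynomial K, r = (Polynomial.X)^5 * 0 ∨ r = (Polynomial.X)^5 * 1 →
        r ∈ Ideal.span {(Polynomial.X : Polynomial K) ^ 5} := by
      rintro r (rfl|rfl) <;> exact Ideal.mem_span_singleton.mpr ⟨_, rfl⟩
    rcases hp with rfl|rfl|rfl|rfl
    · apply hX5; left; simp [hψ]
    · apply hX5; left; simp [hψ]
    · apply hX5; left; simp [hψ]
    · apply hX5; right
      simp only [hψ, map_mul, map_sub, map_pow, aeval_X, Matrix.cons_val_zero,
        Matrix.cons_val_one, Matrix.head_cons, Matrix.cons_val_two, Matrix.tail_cons]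
      norm_num
      ring
  have hψF : ψ (X 0 * (X 0 - X 2) * (X 0 + X 2) * ((X 0:R3 K) ^ 2 - X 1 ^ 2)
      * ((X 0 - X 2) ^ 2 - X 1 ^ 2) * ((X 0 + X 2) ^ 2 - X 1 ^ 2)) = Polynomial.X ^ 9 := by
    simp only [hψ, map_mul, map_sub, map_add, map_pow, aeval_X, Matrix.cons_val_zero,
      Matrix.cons_val_one, Matrix.head_cons, Matrix.cons_val_two, Matrix.tail_cons]
    norm_num
    ring
  have h1 : (Polynomial.X : Polynomial K) ^ 9 ∈ (Ideal.span {(Polynomial.X : Polynomial K) ^ 5}) ^ 2 := by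
    rw [← hψF]
    exact hmap (Ideal.mem_map_of_mem ψ hF)
  rw [Ideal.span_singleton_pow, Ideal.mem_span_singleton] at h1
  rw [show ((Polynomial.X : Polynomial K) ^ 5) ^ 2 = Polynomial.X ^ 10 by ring] at h1
  rw [Polynomial.X_pow_dvd_iff] at h1
  have h9 := h1 9 (by norm_num)
  rw [Polynomial.coeff_X_pow] at h9
  simp at h9

theorem loc_mem {P J : Ideal (R3 K)} [P.IsPrime] {s F : R3 K}
    (hs : s ∉ P) (hsF : s * F ∈ J) :
    algebraMap (R3 K) (Localization.AtPrime P) F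
      ∈ Ideal.map (algebraMap (R3 K) (Localization.AtPrime P)) J := by
  have hu : IsUnit (algebraMap (R3 K) (Localization.AtPrime P) s) :=
    IsLocalization.map_units (M := P.primeCompl) _ ⟨s, hs⟩
  obtain ⟨v, hv⟩ := hu
  have h1 : algebraMap (R3 K) (Localization.AtPrime P) (s * F)
      ∈ Ideal.map (algebraMap (R3 K) (Localization.AtPrime P)) J :=
    Ideal.mem_map_of_mem _ hsF
  have h2 : algebraMap (R3 K) (Localization.AtPrime P) F
      = ↑v⁻¹ * algebraMap (R3 K) (Localization.AtPrime P) (s * F) := by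
    rw [map_mul, ← hv, ← mul_assoc, Units.inv_mul, one_mul]
  rw [h2]
  exact Ideal.mul_mem_left _ _ h1

end Stmt17


/-- Over an algebraically closed field `K` of characteristic 3, for
`I = (xy(x²−y²), xz(x²−z²), yz(y²−z²), x(x²−y²)(x²−z²)) ⊆ K[x,y,z]`, the form
`F = x(x−z)(x+z)(x²−y²)((x−z)²−y²)((x+z)²−y²)` lies in `I^(3)` but not in `I²`;
hence `I^(3) ⊄ I²`. -/
theorem stmt17 (K : Type*) [Field K] [IsAlgClosed K] [CharP K 3] :
    let x : MvPolynomial (Fin 3) K := X 0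
    let y : MvPolynomial (Fin 3) K := X 1
    let z : MvPolynomial (Fin 3) K := X 2
    let I : Ideal (MvPolynomial (Fin 3) K) :=
      Ideal.span {x * y * (x ^ 2 - y ^ 2), x * z * (x ^ 2 - z ^ 2), y * z * (y ^ 2 - z ^ 2),
        x * (x ^ 2 - y ^ 2) * (x ^ 2 - z ^ 2)}
    let F : MvPolynomial (Fin 3) K :=
      x * (x - z) * (x + z) * (x ^ 2 - y ^ 2) * ((x - z) ^ 2 - y ^ 2) * ((x + z) ^ 2 - y ^ 2)
    F ∈ symbolicPower I 3 ∧ F ∉ I ^ 2 ∧ ¬ symbolicPower I 3 ≤ I ^ 2 := by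
  intro x y z I F
  have hFI2 : F ∉ I ^ 2 := Stmt17.notI2
  have hsym : F ∈ symbolicPower I 3 := by
    unfold symbolicPower
    refine Submodule.mem_iInf _ |>.mpr fun P => Submodule.mem_iInf _ |>.mpr fun hP => ?_
    haveI hPrime : P.IsPrime := hP.1
    rw [Ideal.mem_comap]
    by_cases hy : (X 1 : MvPolynomial (Fin 3) K) ∈ P
    · by_cases hz : (X 2 : MvPolynomial (Fin 3) K) ∈ P
      · exfalso
        obtain ⟨hPr, g0, hann⟩ := isAssociatedPrime_iff.mp hP
        obtain ⟨f', rfl⟩ := Submodule.Quotient.mk_surjective _ g0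
        have hyf : X 1 * f' ∈ I := by
          have h := hann ▸ hy
          rw [Submodule.mem_colon_singleton, Submodule.mem_bot, ← Submodule.Quotient.mk_smul,
            Submodule.Quotient.mk_eq_zero, smul_eq_mul] at h
          exact h
        have hzf : X 2 * f' ∈ I := by
          have h := hann ▸ hz
          rw [Submodule.mem_colon_singleton, Submodule.mem_bot, ← Submodule.Quotient.mk_smul,
            Submodule.Quotient.mk_eq_zero, smul_eq_mul] at h
          exact h
        have hfI : f' ∈ I := Stmt17.socle f' hyf hzf
        have hmk : (Submodule.Quotient.mk f' : MvPolynomial (Fin 3) K ⧸ I) = 0 :=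
          (Submodule.Quotient.mk_eq_zero _).mpr hfI
        rw [hmk] at hann
        exact hPr.ne_top (hann.trans (by ext; simp [Submodule.mem_colon_singleton]))
      · exact Stmt17.loc_mem (fun h => hz (hPrime.mem_of_pow_mem 3 h)) Stmt17.certZ
    · exact Stmt17.loc_mem (fun h => hy (hPrime.mem_of_pow_mem 3 h)) Stmt17.certY
  exact ⟨hsym, hFI2, fun hle => hFI2 (hle hsym)⟩
end
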